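/- Let Â be a symmetric n×n real matrix with spectral radius at most 1, L = I − Â, β > 0, α ∈ (0,1], and H ∈ ℝ^{n×f}. Define Z^{(0)} = (1/(αβ+1))H + (β/(αβ+1))LH and Z^{(k+1)} = ((αβ−α+1)/(αβ+1))·Â·Z^{(k)} + (α/(αβ+1))·H + (αβ/(αβ+1))·L·H. Then Z^{(k)} converges as k → ∞ to {(β+1/α)I + (1−β−1/α)Â}⁻¹(I + βL)H. -/

import Mathlib

open Matrix Filter
open scoped Matrix.Norms.L2Operator Topology

open scoped RealInnerProductSpace



lemma aux_norm_le_one {n : ℕ} (A : Matrix (Fin n) (Fin n) ℝ) (hA : A.IsHermitian)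
    (heig : ∀ i, |hA.eigenvalues i| ≤ 1) : ‖A‖ ≤ 1 := by
  rw [Matrix.l2_opNorm_def]
  apply ContinuousLinearMap.opNorm_le_bound _ zero_le_one
  intro x
  rw [one_mul]
  show ‖(Matrix.toEuclideanLin A) x‖ ≤ ‖x‖
  set b := hA.eigenvectorBasis with hb
  set T : EuclideanSpace ℝ (Fin n) →ₗ[ℝ] EuclideanSpace ℝ (Fin n) := Matrix.toEuclideanLin A with hT
  have hsymm : LinearMap.IsSymmetric T := (Matrix.isHermitian_iff_isSymmetric).1 hA
  have hTb : ∀ i, T (b i) = hA.eigenvalues i • (b i) := by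
    intro i
    have := hA.mulVec_eigenvectorBasis i
    ext j
    exact congrFun this j
  have hrepr : ∀ i, b.repr (T x) i = hA.eigenvalues i * b.repr x i := by
    intro i
    rw [b.repr_apply_apply, b.repr_apply_apply, ← hsymm (b i) x, hTb i,
      real_inner_smul_left]
  have h1 : ‖T x‖ = ‖b.repr (T x)‖ := (b.repr.norm_map _).symm
  have h2 : ‖x‖ = ‖b.repr x‖ := (b.repr.norm_map _).symm
  rw [h1, h2, EuclideanSpace.norm_eq, EuclideanSpace.norm_eq]
  apply Real.sqrt_le_sqrt
  apply Finset.sum_le_sum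
  intro i _
  rw [hrepr i]
  have := heig i
  have h3 : |b.repr x i| ≤ |b.repr x i| := le_refl _
  simp only [Real.norm_eq_abs, abs_mul, mul_pow]
  have ha2 : |hA.eigenvalues i| ^ 2 ≤ 1 := by nlinarith [abs_nonneg (hA.eigenvalues i)]
  nlinarith [sq_nonneg (|b.repr x i|)]


lemma aux_isUnit_det {n : ℕ} (A : Matrix (Fin n) (Fin n) ℝ) (hA : A.IsHermitian) (hAn : ‖A‖ ≤ 1)
    (t : ℝ) (ht : 1 < t) : IsUnit (t • (1 : Matrix (Fin n) (Fin n) ℝ) + (1 - t) • A).det := by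
  have hherm : (t • (1 : Matrix (Fin n) (Fin n) ℝ) + (1 - t) • A).IsHermitian := by
    have hAt : Aᵀ = A := by simpa using hA.eq
    show _ᴴ = _
    simp [Matrix.conjTranspose_add, Matrix.conjTranspose_smul, hA.eq, hAt]
  have hpd : (t • (1 : Matrix (Fin n) (Fin n) ℝ) + (1 - t) • A).PosDef := by
    refine Matrix.PosDef.of_dotProduct_mulVec_pos hherm (fun x hx => ?_)
    set xE : EuclideanSpace ℝ (Fin n) := (WithLp.equiv 2 _).symm x with hxE
    have hxEne : xE ≠ 0 := by
      simpa [hxE] using hx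
    have hs : x ⬝ᵥ x = ‖xE‖ ^ 2 := by
      rw [← real_inner_self_eq_norm_sq]
      rw [EuclideanSpace.inner_eq_star_dotProduct]
      simp [hxE]
    have hxpos : 0 < ‖xE‖ := norm_pos_iff.mpr hxEne
    have hspos : 0 < ‖xE‖ ^ 2 := by positivity
    have hd : |x ⬝ᵥ (A *ᵥ x)| ≤ ‖xE‖ ^ 2 := by
      have h1 : x ⬝ᵥ (A *ᵥ x) = ⟪xE, (WithLp.equiv 2 _).symm (A *ᵥ x)⟫ := by
        rw [EuclideanSpace.inner_eq_star_dotProduct]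
        simp [hxE, dotProduct_comm]
      rw [h1]
      calc |⟪xE, (WithLp.equiv 2 _).symm (A *ᵥ x)⟫|
          ≤ ‖xE‖ * ‖(WithLp.equiv 2 ((Fin n) → ℝ)).symm (A *ᵥ x)‖ := abs_real_inner_le_norm _ _
        _ ≤ ‖xE‖ * (‖A‖ * ‖xE‖) := by
            apply mul_le_mul_of_nonneg_left _ (norm_nonneg _)
            exact A.l2_opNorm_mulVec xE
        _ ≤ ‖xE‖ ^ 2 := by nlinarith [norm_nonneg xE]
    have hmv : (t • (1 : Matrix (Fin n) (Fin n) ℝ) + (1 - t) • A) *ᵥ x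
        = t • x + (1 - t) • (A *ᵥ x) := by
      rw [Matrix.add_mulVec, Matrix.smul_mulVec, Matrix.smul_mulVec, Matrix.one_mulVec]
    rw [star_trivial, hmv, dotProduct_add, dotProduct_smul, dotProduct_smul,
      smul_eq_mul, smul_eq_mul, hs]
    rcases abs_le.mp hd with ⟨h1, h2⟩
    nlinarith
  exact hpd.det_pos.ne'.isUnit


/-- GNN-HF-iter converges to GNN-HF-closed. -/
theorem gnn_hf_iter_converges (n f : ℕ)
    (A : Matrix (Fin n) (Fin n) ℝ) (hA : A.IsHermitian)
    (heig : ∀ i, |hA.eigenvalues i| ≤ 1)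
    (L : Matrix (Fin n) (Fin n) ℝ) (hL : L = 1 - A)
    (β : ℝ) (hβ : 0 < β)
    (α : ℝ) (hα : α ∈ Set.Ioc (0 : ℝ) 1)
    (H : Matrix (Fin n) (Fin f) ℝ)
    (Z : ℕ → Matrix (Fin n) (Fin f) ℝ)
    (hZ0 : Z 0 = (1 / (α * β + 1)) • H + (β / (α * β + 1)) • (L * H))
    (hZ : ∀ k, Z (k + 1) = ((α * β - α + 1) / (α * β + 1)) • (A * Z k)
        + (α / (α * β + 1)) • H + (α * β / (α * β + 1)) • (L * H)) :
    Tendsto Z atTop (𝓝 (((β + 1 / α) • (1 : Matrix (Fin n) (Fin n) ℝ)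
        + (1 - β - 1 / α) • A)⁻¹ * ((1 + β • L) * H))) := by
  obtain ⟨hα0, hα1⟩ := hα
  have hden : (0:ℝ) < α * β + 1 := by nlinarith
  set c : ℝ := (α * β - α + 1) / (α * β + 1) with hc
  have hnum : (0:ℝ) < α * β - α + 1 := by nlinarith
  have hc0 : 0 ≤ c := le_of_lt (div_pos hnum hden)
  have hc1 : c < 1 := by
    rw [hc, div_lt_one hden]
    nlinarith
  set t : ℝ := β + 1 / α with htdef
  have hinv : 1 ≤ 1 / α := by
    rw [le_div_iff₀ hα0]; linarith
  have ht : 1 < t := by rw [htdef]; linarith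
  have hAn : ‖A‖ ≤ 1 := aux_norm_le_one A hA heig
  set M : Matrix (Fin n) (Fin n) ℝ := (β + 1/α) • (1 : Matrix (Fin n) (Fin n) ℝ)
      + (1 - β - 1/α) • A with hM
  have hM' : M = t • (1 : Matrix (Fin n) (Fin n) ℝ) + (1 - t) • A := by
    rw [hM, htdef]; ring_nf
  have hdet : IsUnit M.det := by
    rw [hM']
    exact aux_isUnit_det A hA hAn t ht
  set Zs : Matrix (Fin n) (Fin f) ℝ := M⁻¹ * ((1 + β • L) * H) with hZs
  have hMZs : M * Zs = (1 + β • L) * H := by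
    rw [hZs, ← Matrix.mul_assoc, Matrix.mul_nonsing_inv M hdet, Matrix.one_mul]
  have hkey : (1 : Matrix (Fin n) (Fin n) ℝ) - c • A = (α / (α * β + 1)) • M := by
    rw [hM, smul_add, smul_smul, smul_smul]
    have e1 : α / (α * β + 1) * (β + 1/α) = 1 := by field_simp
    have e2 : α / (α * β + 1) * (1 - β - 1/α) = -c := by
      rw [hc]; field_simp; ring
    rw [e1, e2, one_smul, neg_smul, sub_eq_add_neg]
  have hW : (α / (α * β + 1)) • ((1 + β • L) * H)
      = (α / (α * β + 1)) • H + (α * β / (α * β + 1)) • (L * H) := by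
    rw [Matrix.add_mul, Matrix.one_mul, Matrix.smul_mul, smul_add, smul_smul]
    congr 2
    field_simp
  have hfix : Zs = c • (A * Zs) + (α / (α * β + 1)) • H + (α * β / (α * β + 1)) • (L * H) := by
    have h1 : ((1 : Matrix (Fin n) (Fin n) ℝ) - c • A) * Zs = (α / (α * β + 1)) • ((1 + β • L) * H) := by
      rw [hkey, Matrix.smul_mul, hMZs]
    rw [Matrix.sub_mul, Matrix.one_mul, Matrix.smul_mul, sub_eq_iff_eq_add] at h1
    rw [add_assoc, ← hW]
    exact h1.trans (add_comm _ _)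
  have hE : ∀ k, Z (k + 1) - Zs = c • (A * (Z k - Zs)) := by
    intro k
    rw [hZ k, Matrix.mul_sub, smul_sub]
    conv_lhs => rw [hfix]
    abel
  have hnorm : ∀ k, ‖Z k - Zs‖ ≤ c ^ k * ‖Z 0 - Zs‖ := by
    intro k
    induction k with
    | zero => simp
    | succ k ih =>
      rw [hE k]
      have h1 : ‖c • (A * (Z k - Zs))‖ = c * ‖A * (Z k - Zs)‖ := by
        rw [norm_smul, Real.norm_eq_abs, abs_of_nonneg hc0]
      rw [h1]
      have h2 : ‖A * (Z k - Zs)‖ ≤ ‖Z k - Zs‖ := by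
        calc ‖A * (Z k - Zs)‖ ≤ ‖A‖ * ‖Z k - Zs‖ := Matrix.l2_opNorm_mul _ _
          _ ≤ 1 * ‖Z k - Zs‖ := by
              apply mul_le_mul_of_nonneg_right hAn (norm_nonneg _)
          _ = ‖Z k - Zs‖ := one_mul _
      calc c * ‖A * (Z k - Zs)‖ ≤ c * ‖Z k - Zs‖ := mul_le_mul_of_nonneg_left h2 hc0
        _ ≤ c * (c ^ k * ‖Z 0 - Zs‖) := mul_le_mul_of_nonneg_left ih hc0
        _ = c ^ (k + 1) * ‖Z 0 - Zs‖ := by ring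
  have hg : Tendsto (fun k => c ^ k * ‖Z 0 - Zs‖) atTop (𝓝 0) := by
    have := (tendsto_pow_atTop_nhds_zero_of_lt_one hc0 hc1).mul_const (‖Z 0 - Zs‖)
    simpa using this
  have h0 : Tendsto (fun k => Z k - Zs) atTop (𝓝 0) :=
    squeeze_zero_norm hnorm hg
  have := h0.add (tendsto_const_nhds (x := Zs) (f := atTop))
  simpa using this
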